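/- Let n ≥ 2, ℓ ≥ 0 and i ∈ {0,1} be integers. Then 2 times the number of (n+1)-tuples m = (m_0, …, m_n) of nonnegative integers with m_0 + ⋯ + m_n = ℓ and ∑_{r odd} m_r ≡ i (mod 2) equals C(n+ℓ, n) + (−1)^i · ε · C(⌊(n+ℓ)/2⌋, ⌊n/2⌋), where ε = 1 if n·ℓ is even and ε = 0 if n·ℓ is odd, and C(·,·) is the binomial coefficient. (This counts the dominant maximal weights of V((ℓ−1)Λ_0 + Λ_i) over C_n^{(1)}.) -/

import Mathlib

open Finset

/-- Sum over odd-indexed coordinates. -/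
def oddsum {k : ℕ} (m : Fin k → ℕ) : ℕ :=
  ∑ r ∈ Finset.univ.filter (fun r : Fin k => (r : ℕ) % 2 = 1), m r

lemma oddsum_snoc (k : ℕ) (x : Fin k → ℕ) (a : ℕ) :
    oddsum (Fin.snoc x a : Fin (k + 1) → ℕ) = oddsum x + if k % 2 = 1 then a else 0 := by
  unfold oddsum
  rw [Finset.sum_filter, Finset.sum_filter, Fin.sum_univ_castSucc]
  simp [Fin.snoc_castSucc, Fin.snoc_last, Fin.val_last]

/-- Peeling off the last coordinate of an `antidiagonalTuple`. -/
lemma snoc_rec {M : Type*} [AddCommMonoid M] (k ℓ : ℕ) (f : (Fin (k + 1) → ℕ) → M) :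
    ∑ m ∈ Finset.Nat.antidiagonalTuple (k + 1) ℓ, f m
      = ∑ p ∈ Finset.HasAntidiagonal.antidiagonal ℓ,
          ∑ x ∈ Finset.Nat.antidiagonalTuple k p.1, f (Fin.snoc x p.2) := by
  rw [Finset.sum_sigma']
  refine Finset.sum_nbij'
    (i := fun m => (⟨(∑ r, Fin.init m r, m (Fin.last k)), Fin.init m⟩ :
      Σ _p : ℕ × ℕ, Fin k → ℕ))
    (j := fun q => Fin.snoc q.2 q.1.2) ?_ ?_ ?_ ?_ ?_
  · intro m hm
    rw [Finset.Nat.mem_antidiagonalTuple] at hm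
    rw [Finset.mem_sigma, Finset.HasAntidiagonal.mem_antidiagonal, Finset.Nat.mem_antidiagonalTuple]
    constructor
    · rw [← hm, Fin.sum_univ_castSucc]
      rfl
    · rfl
  · intro q hq
    rw [Finset.mem_sigma, Finset.HasAntidiagonal.mem_antidiagonal, Finset.Nat.mem_antidiagonalTuple] at hq
    rw [Finset.Nat.mem_antidiagonalTuple, Fin.sum_univ_castSucc]
    simp only [Fin.snoc_castSucc, Fin.snoc_last]
    rw [hq.2, hq.1]
  · intro m hm
    exact Fin.snoc_init_self m
  · intro q hq
    ext
    · simp [Fin.init_snoc]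
      rw [Finset.mem_sigma, Finset.HasAntidiagonal.mem_antidiagonal, Finset.Nat.mem_antidiagonalTuple] at hq
      exact hq.2
    · simp
    · simp [Fin.init_snoc]
  · intro m hm
    rw [Fin.snoc_init_self]

/-- Stars and bars: number of `(k+1)`-tuples summing to `ℓ`. -/
lemma card_antidiagonalTuple (k : ℕ) : ∀ ℓ : ℕ,
    (Finset.Nat.antidiagonalTuple (k + 1) ℓ).card = (k + ℓ).choose k := by
  induction k with
  | zero => intro ℓ; rw [Finset.Nat.antidiagonalTuple_one]; simp
  | succ k ih =>
    intro ℓ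
    rw [Finset.card_eq_sum_ones, snoc_rec,
      Finset.Nat.sum_antidiagonal_eq_sum_range_succ_mk]
    have : ∀ i ∈ Finset.range (ℓ + 1),
        (∑ _x ∈ Finset.Nat.antidiagonalTuple (k + 1) i, 1) = (i + k).choose k := by
      intro i _
      rw [← Finset.card_eq_sum_ones, ih i, Nat.add_comm]
    rw [Finset.sum_congr rfl this, Nat.sum_range_add_choose]
    congr 1
    omega

/-- Signed count of tuples. -/
def Dsum (k ℓ : ℕ) : ℤ :=
  ∑ m ∈ Finset.Nat.antidiagonalTuple k ℓ, (-1 : ℤ) ^ (oddsum m)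

lemma Dsum_one (ℓ : ℕ) : Dsum 1 ℓ = 1 := by
  rw [Dsum, Finset.Nat.antidiagonalTuple_one, Finset.sum_singleton]
  have : oddsum (![ℓ] : Fin 1 → ℕ) = 0 := by
    unfold oddsum
    apply Finset.sum_eq_zero
    intro r hr
    simp at hr
  rw [this, pow_zero]

lemma Dsum_rec (k ℓ : ℕ) :
    Dsum (k + 1) ℓ = ∑ i ∈ Finset.range (ℓ + 1),
      (-1 : ℤ) ^ (if k % 2 = 1 then ℓ - i else 0) * Dsum k i := by
  rw [Dsum, snoc_rec, Finset.Nat.sum_antidiagonal_eq_sum_range_succ_mk]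
  refine Finset.sum_congr rfl fun i _ => ?_
  rw [Dsum, Finset.mul_sum]
  refine Finset.sum_congr rfl fun x _ => ?_
  rw [oddsum_snoc, pow_add, mul_comm]

lemma auxG (s : ℕ) : ∀ ℓ : ℕ,
    (∑ i ∈ Finset.range (ℓ + 1),
      (if i % 2 = 0 then ((s + i / 2).choose s : ℤ) else 0))
      = ((s + 1 + ℓ / 2).choose (s + 1) : ℤ) := by
  intro ℓ
  induction ℓ with
  | zero => simp
  | succ ℓ ih =>
    rw [Finset.sum_range_succ, ih]
    rcases Nat.even_or_odd (ℓ + 1) with h | h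
    · have h2 : (ℓ + 1) % 2 = 0 := Nat.even_iff.mp h
      rw [if_pos h2]
      have e1 : (ℓ + 1) / 2 = ℓ / 2 + 1 := by omega
      rw [e1]
      have e3 : s + (ℓ / 2 + 1) = s + 1 + ℓ / 2 := by omega
      have e4 : s + 1 + (ℓ / 2 + 1) = (s + 1 + ℓ / 2) + 1 := by omega
      rw [e3, e4, Nat.choose_succ_succ' (s + 1 + ℓ / 2) s]
      push_cast
      ring
    · have h2 : ¬ ((ℓ + 1) % 2 = 0) := by rw [Nat.odd_iff] at h; omega
      rw [if_neg h2, add_zero]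
      congr 2
      omega

lemma auxF (s : ℕ) : ∀ ℓ : ℕ,
    (∑ i ∈ Finset.range (ℓ + 1), (-1 : ℤ) ^ (ℓ - i) * ((s + i / 2).choose s : ℤ))
      = if ℓ % 2 = 0 then ((s + ℓ / 2).choose s : ℤ) else 0 := by
  intro ℓ
  induction ℓ with
  | zero => simp
  | succ ℓ ih =>
    rw [Finset.sum_range_succ]
    have step : (∑ i ∈ Finset.range (ℓ + 1), (-1 : ℤ) ^ (ℓ + 1 - i) * ((s + i / 2).choose s : ℤ))
        = - ∑ i ∈ Finset.range (ℓ + 1), (-1 : ℤ) ^ (ℓ - i) * ((s + i / 2).choose s : ℤ) := by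
      rw [← Finset.sum_neg_distrib]
      refine Finset.sum_congr rfl fun i hi => ?_
      rw [Finset.mem_range] at hi
      have : ℓ + 1 - i = (ℓ - i) + 1 := by omega
      rw [this, pow_succ]
      ring
    rw [step, ih]
    rcases Nat.even_or_odd ℓ with h | h
    · have h2 : ℓ % 2 = 0 := Nat.even_iff.mp h
      rw [if_pos h2, if_neg (by omega)]
      have : (ℓ + 1) / 2 = ℓ / 2 := by omega
      rw [this]
      simp
    · have h2 : ¬ (ℓ % 2 = 0) := by rw [Nat.odd_iff] at h; omega
      rw [if_neg h2, if_pos (by rw [Nat.odd_iff] at h; omega)]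
      simp

lemma mul_mod_two_even (a b : ℕ) (h : a % 2 = 0) : a * b % 2 = 0 := by
  rw [Nat.mul_mod, h, zero_mul]; rfl

lemma mul_mod_two_odd (a b : ℕ) (h : a % 2 = 1) : a * b % 2 = b % 2 := by
  rw [Nat.mul_mod, h, one_mul]
  omega

lemma Dsum_closed (n : ℕ) : ∀ ℓ : ℕ,
    Dsum (n + 1) ℓ = if n * ℓ % 2 = 0 then (((n + ℓ) / 2).choose (n / 2) : ℤ) else 0 := by
  induction n with
  | zero => intro ℓ; rw [Dsum_one]; simp
  | succ n ih =>
    intro ℓ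
    rw [Dsum_rec]
    rcases Nat.even_or_odd n with h | h
    · obtain ⟨s, rfl⟩ := h
      have hD : ∀ i, Dsum (s + s + 1) i = ((s + i / 2).choose s : ℤ) := by
        intro i
        rw [ih i, if_pos (mul_mod_two_even _ _ (by omega))]
        norm_cast
        congr 1 <;> omega
      have hpar : (s + s + 1) % 2 = 1 := by omega
      have hsum : (∑ i ∈ Finset.range (ℓ + 1),
          (-1 : ℤ) ^ (if (s + s + 1) % 2 = 1 then ℓ - i else 0) * Dsum (s + s + 1) i)
          = ∑ i ∈ Finset.range (ℓ + 1), (-1 : ℤ) ^ (ℓ - i) * ((s + i / 2).choose s : ℤ) := by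
        refine Finset.sum_congr rfl fun i _ => ?_
        rw [hD, if_pos hpar]
      rw [hsum, auxF]
      have hc : (s + s + 1) * ℓ % 2 = ℓ % 2 := mul_mod_two_odd _ _ (by omega)
      rw [hc]
      rcases Nat.even_or_odd ℓ with hl | hl
      · have hl2 : ℓ % 2 = 0 := Nat.even_iff.mp hl
        rw [if_pos hl2, if_pos hl2]
        norm_cast
        congr 1 <;> omega
      · have hl2 : ℓ % 2 = 1 := Nat.odd_iff.mp hl
        rw [if_neg (by omega), if_neg (by omega)]
    · obtain ⟨s, rfl⟩ := h
      have hD : ∀ i, Dsum (2 * s + 1 + 1) i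
          = if i % 2 = 0 then ((s + i / 2).choose s : ℤ) else 0 := by
        intro i
        rw [ih i]
        have hc : (2 * s + 1) * i % 2 = i % 2 := mul_mod_two_odd _ _ (by omega)
        rw [hc]
        rcases Nat.even_or_odd i with hi | hi
        · have hi2 : i % 2 = 0 := Nat.even_iff.mp hi
          rw [if_pos hi2, if_pos hi2]
          norm_cast
          congr 1 <;> omega
        · have hi2 : i % 2 = 1 := Nat.odd_iff.mp hi
          rw [if_neg (by omega), if_neg (by omega)]
      have hpar : ¬ ((2 * s + 1 + 1) % 2 = 1) := by omega
      have hsum : (∑ i ∈ Finset.range (ℓ + 1),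
          (-1 : ℤ) ^ (if (2 * s + 1 + 1) % 2 = 1 then ℓ - i else 0) * Dsum (2 * s + 1 + 1) i)
          = ∑ i ∈ Finset.range (ℓ + 1),
              (if i % 2 = 0 then ((s + i / 2).choose s : ℤ) else 0) := by
        refine Finset.sum_congr rfl fun i _ => ?_
        rw [hD, if_neg hpar, pow_zero, one_mul]
      rw [hsum, auxG]
      rw [if_pos (mul_mod_two_even _ _ (by omega))]
      norm_cast
      congr 1 <;> omega

/-- **Number of dominant maximal weights in type `C_n^(1)`.**
For `n ≥ 2`, `ℓ ≥ 0` and `i ∈ {0,1}`, twice the number of `(n+1)`-tuples `m` of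
nonnegative integers with `m_0 + ⋯ + m_n = ℓ` and `∑_{r odd} m_r ≡ i (mod 2)` equals
`C(n+ℓ, n) + (-1)^i·ε·C(⌊(n+ℓ)/2⌋, ⌊n/2⌋)` where `ε = 1` if `n·ℓ` is even and `0`
otherwise. -/
theorem stmt_14 (n ℓ i : ℕ) (hn : 2 ≤ n) (hi : i ≤ 1) :
    (2 * ((Fintype.piFinset fun _ : Fin (n + 1) => Finset.range (ℓ + 1)).filter
        (fun m => ∑ r, m r = ℓ ∧
          (∑ r ∈ Finset.univ.filter (fun r : Fin (n + 1) => (r : ℕ) % 2 = 1), m r) % 2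
            = i)).card : ℤ)
      = (Nat.choose (n + ℓ) n : ℤ)
        + (-1 : ℤ) ^ i * (if n * ℓ % 2 = 0 then 1 else 0) *
            (Nat.choose ((n + ℓ) / 2) (n / 2) : ℤ) := by
  have hset : ((Fintype.piFinset fun _ : Fin (n + 1) => Finset.range (ℓ + 1)).filter
        (fun m => ∑ r, m r = ℓ ∧
          (∑ r ∈ Finset.univ.filter (fun r : Fin (n + 1) => (r : ℕ) % 2 = 1), m r) % 2
            = i))
      = (Finset.Nat.antidiagonalTuple (n + 1) ℓ).filter (fun m => oddsum m % 2 = i) := by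
    ext m
    simp only [Finset.mem_filter, Fintype.mem_piFinset, Finset.mem_range,
      Finset.Nat.mem_antidiagonalTuple]
    simp only [oddsum]
    constructor
    · rintro ⟨_, h1, h2⟩; exact ⟨h1, h2⟩
    · rintro ⟨h1, h2⟩
      refine ⟨fun r => ?_, h1, h2⟩
      have hle : m r ≤ ∑ r, m r :=
        Finset.single_le_sum (fun _ _ => Nat.zero_le _) (Finset.mem_univ r)
      omega
  rw [hset]
  have key : (2 : ℤ) * (((Finset.Nat.antidiagonalTuple (n + 1) ℓ).filter
        (fun m => oddsum m % 2 = i)).card : ℤ)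
      = ((Finset.Nat.antidiagonalTuple (n + 1) ℓ).card : ℤ)
        + (-1 : ℤ) ^ i * Dsum (n + 1) ℓ := by
    rw [Dsum, Finset.mul_sum, Finset.card_eq_sum_ones (Finset.Nat.antidiagonalTuple (n + 1) ℓ)]
    push_cast
    rw [← Finset.sum_boole, Finset.mul_sum, ← Finset.sum_add_distrib]
    refine Finset.sum_congr rfl fun m _ => ?_
    have hm : (-1 : ℤ) ^ (oddsum m) = (-1 : ℤ) ^ (oddsum m % 2) := by
      conv_lhs => rw [← Nat.div_add_mod (oddsum m) 2]
      rw [pow_add, pow_mul]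
      norm_num
    rw [hm]
    have hi2 : i = 0 ∨ i = 1 := by omega
    have ho : oddsum m % 2 = 0 ∨ oddsum m % 2 = 1 := by omega
    rcases hi2 with rfl | rfl <;> rcases ho with ho | ho <;> simp [ho] <;> norm_num
  rw [key, card_antidiagonalTuple, Dsum_closed]
  split_ifs <;> ring
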